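/- Let r, s, t be positive integers with 2^r + 3^s = 5^t. Then (r, s, t) ∈ {(1,1,1), (4,2,2)}; that is, the only solutions are 2+3=5 and 2⁴+3²=5². -/

import Mathlib

lemma pow_cycle {n : ℕ} {a : ZMod n} {k : ℕ} (h : a ^ k = 1) (m : ℕ) :
    a ^ m = a ^ (m % k) := by
  nth_rewrite 1 [← Nat.div_add_mod m k]
  rw [pow_add, pow_mul, h, one_pow, one_mul]

-- The key auxiliary equation: 2 + 3^s = 5^t forces s = t = 1.
lemma aux_two_add (s t : ℕ) (hs : 0 < s) (ht : 0 < t) (h : 2 + 3 ^ s = 5 ^ t) :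
    s = 1 ∧ t = 1 := by
  rcases eq_or_lt_of_le (show 1 ≤ s from hs) with h1 | h2
  · -- s = 1
    have hs1 : s = 1 := h1.symm
    subst hs1
    have h5 : (5:ℕ) ^ 1 = 5 ^ t := by omega
    have := Nat.pow_right_injective (by norm_num : 2 ≤ 5) h5
    exact ⟨rfl, this.symm⟩
  · exfalso
    -- s ≥ 2.  First, s is odd (mod 4).
    have h4 : ((2 + 3 ^ s : ℕ) : ZMod 4) = ((5 ^ t : ℕ) : ZMod 4) := by rw [h]
    push_cast at h4
    rw [pow_cycle (show (3:ZMod 4)^2 = 1 by decide) s,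
        pow_cycle (show (5:ZMod 4)^2 = 1 by decide) t] at h4
    have hs2 : s % 2 = 1 := by
      rcases Nat.mod_two_eq_zero_or_one s with e | e
      · rw [e] at h4
        rcases Nat.mod_two_eq_zero_or_one t with e' | e' <;> rw [e'] at h4 <;>
          exact absurd h4 (by decide)
      · exact e
    -- mod 9 : since s ≥ 2, 3^s ≡ 0, so 5^t ≡ 2 mod 9, forcing t ≡ 5 mod 6.
    obtain ⟨u, rfl⟩ : ∃ u, s = 2 + u := ⟨s - 2, by omega⟩
    have h9 : ((2 + 3 ^ (2+u) : ℕ) : ZMod 9) = ((5 ^ t : ℕ) : ZMod 9) := by rw [h]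
    push_cast at h9
    rw [pow_add, show (3:ZMod 9)^2 = 0 by decide, zero_mul, add_zero,
        pow_cycle (show (5:ZMod 9)^6 = 1 by decide) t] at h9
    have ht6 : t % 6 = 5 := by
      have h6 : t % 6 = 0 ∨ t % 6 = 1 ∨ t % 6 = 2 ∨ t % 6 = 3 ∨ t % 6 = 4 ∨ t % 6 = 5 := by omega
      rcases h6 with e | e | e | e | e | e <;> first | exact e | (rw [e] at h9; exact absurd h9 (by decide))
    -- mod 7 : contradiction
    have h7 : ((2 + 3 ^ (2+u) : ℕ) : ZMod 7) = ((5 ^ t : ℕ) : ZMod 7) := by rw [h]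
    push_cast at h7
    rw [pow_cycle (show (3:ZMod 7)^6 = 1 by decide) (2+u),
        pow_cycle (show (5:ZMod 7)^6 = 1 by decide) t, ht6] at h7
    have hs6 : (2+u) % 6 = 1 ∨ (2+u) % 6 = 3 ∨ (2+u) % 6 = 5 := by omega
    rcases hs6 with e | e | e <;> rw [e] at h7 <;> exact absurd h7 (by decide)

theorem two_pow_add_three_pow_eq_five_pow (r s t : ℕ)
    (hr : 0 < r) (hs : 0 < s) (ht : 0 < t) (h : 2 ^ r + 3 ^ s = 5 ^ t) :
    (r, s, t) = (1, 1, 1) ∨ (r, s, t) = (4, 2, 2) := by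
  rcases Nat.lt_or_ge r 3 with hr3 | hr3
  · interval_cases r
    · -- r = 1
      norm_num at h
      obtain ⟨rfl, rfl⟩ := aux_two_add s t hs ht h
      left; rfl
    · -- r = 2 : impossible
      exfalso
      norm_num at h
      -- mod 3 forces t even
      obtain ⟨v, rfl⟩ : ∃ v, s = 1 + v := ⟨s - 1, by omega⟩
      have h3 : ((4 + 3 ^ (1+v) : ℕ) : ZMod 3) = ((5 ^ t : ℕ) : ZMod 3) := by rw [h]
      push_cast at h3
      rw [pow_add, show (3:ZMod 3)^1 = 0 by decide, zero_mul, add_zero,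
        pow_cycle (show (5:ZMod 3)^2 = 1 by decide) t] at h3
      have ht2 : t % 2 = 0 := by
        rcases Nat.mod_two_eq_zero_or_one t with e | e
        · exact e
        · rw [e] at h3; exact absurd h3 (by decide)
      -- mod 8 gives contradiction
      have h8 : ((4 + 3 ^ (1+v) : ℕ) : ZMod 8) = ((5 ^ t : ℕ) : ZMod 8) := by rw [h]
      push_cast at h8
      rw [pow_cycle (show (3:ZMod 8)^2 = 1 by decide) (1+v),
        pow_cycle (show (5:ZMod 8)^2 = 1 by decide) t, ht2] at h8
      rcases Nat.mod_two_eq_zero_or_one (1+v) with e | e <;> rw [e] at h8 <;>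
        exact absurd h8 (by decide)
  · -- r ≥ 3
    obtain ⟨u, rfl⟩ : ∃ u, r = 3 + u := ⟨r - 3, by omega⟩
    -- mod 8 : s and t are even
    have h8 : ((2 ^ (3+u) + 3 ^ s : ℕ) : ZMod 8) = ((5 ^ t : ℕ) : ZMod 8) := by rw [h]
    push_cast at h8
    rw [pow_add, show (2:ZMod 8)^3 = 0 by decide, zero_mul, zero_add,
        pow_cycle (show (3:ZMod 8)^2 = 1 by decide) s,
        pow_cycle (show (5:ZMod 8)^2 = 1 by decide) t] at h8
    have hst : s % 2 = 0 ∧ t % 2 = 0 := by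
      rcases Nat.mod_two_eq_zero_or_one s with e | e <;>
        rcases Nat.mod_two_eq_zero_or_one t with e' | e' <;>
          rw [e, e'] at h8 <;> first | exact ⟨e, e'⟩ | exact absurd h8 (by decide)
    obtain ⟨b, rfl⟩ : ∃ b, s = 2 * b := ⟨s / 2, by omega⟩
    obtain ⟨c, rfl⟩ : ∃ c, t = 2 * c := ⟨t / 2, by omega⟩
    have hb : 0 < b := by omega
    have hc : 0 < c := by omega
    rw [pow_mul' 3 2 b, pow_mul' 5 2 c] at h
    -- 3^b, 5^c basic facts
    have hA : (3:ℕ) ^ b % 2 = 1 := by simp [Nat.pow_mod]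
    have hB : (5:ℕ) ^ c % 2 = 1 := by simp [Nat.pow_mod]
    have hA3 : 3 ≤ (3:ℕ) ^ b := by
      calc (3:ℕ) = 3 ^ 1 := by norm_num
      _ ≤ 3 ^ b := Nat.pow_le_pow_right (by norm_num) hb
    have hB5 : 5 ≤ (5:ℕ) ^ c := by
      calc (5:ℕ) = 5 ^ 1 := by norm_num
      _ ≤ 5 ^ c := Nat.pow_le_pow_right (by norm_num) hc
    have hBA : (3:ℕ) ^ b < 5 ^ c := by
      by_contra hcon
      push_neg at hcon
      have : ((5:ℕ) ^ c) ^ 2 ≤ ((3:ℕ) ^ b) ^ 2 := Nat.pow_le_pow_left hcon 2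
      have h2pos : 0 < (2:ℕ) ^ (3+u) := Nat.pow_pos (by norm_num)
      omega
    -- factor
    have hde : (5 ^ c + 3 ^ b) * (5 ^ c - 3 ^ b) = 2 ^ (3+u) := by
      rw [← Nat.sq_sub_sq, ← h, Nat.add_sub_cancel]
    have hdd : (5 ^ c - 3 ^ b : ℕ) ∣ 2 ^ (3+u) := ⟨5 ^ c + 3 ^ b, by rw [← hde]; ring⟩
    have hed : (5 ^ c + 3 ^ b : ℕ) ∣ 2 ^ (3+u) := ⟨5 ^ c - 3 ^ b, hde.symm⟩
    obtain ⟨i, hi, hdi⟩ := (Nat.dvd_prime_pow Nat.prime_two).mp hdd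
    obtain ⟨j, hj, hej⟩ := (Nat.dvd_prime_pow Nat.prime_two).mp hed
    -- e = 2^j ≥ 8, so 4 ∣ e
    have hj3 : 3 ≤ j := by
      have h8le : (2:ℕ) ^ 3 ≤ 2 ^ j := by rw [← hej]; omega
      exact (Nat.pow_le_pow_iff_right (by norm_num)).mp h8le
    have h4e : (4:ℕ) ∣ 5 ^ c + 3 ^ b := by
      rw [hej]
      exact dvd_trans (by norm_num : (4:ℕ) ∣ 2^3) (pow_dvd_pow 2 hj3)
    -- d = 2^i with d even and not divisible by 4, so d = 2
    have hd2 : (5:ℕ) ^ c - 3 ^ b = 2 := by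
      rcases i with _ | _ | i
      · -- i = 0 : d = 1, but d is even
        simp at hdi
        omega
      · simpa using hdi
      · -- i ≥ 2 : 4 ∣ d, contradiction
        exfalso
        have h4d : (4:ℕ) ∣ 5 ^ c - 3 ^ b := by
          rw [hdi]
          exact dvd_trans (by norm_num : (4:ℕ) ∣ 2^2) (pow_dvd_pow 2 (by omega))
        omega
    have h2eq : (2:ℕ) + 3 ^ b = 5 ^ c := by omega
    obtain ⟨rfl, rfl⟩ := aux_two_add b c hb hc h2eq
    norm_num at h
    have hu : (2:ℕ) ^ (3+u) = 2 ^ 4 := by omega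
    have := Nat.pow_right_injective (le_refl 2) hu
    obtain rfl : u = 1 := by omega
    right
    norm_num
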